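/- Coverage of maximal aligned intervals: Let a < d be reals, k a nonnegative integer, and suppose the collection C of maximal aligned intervals for window [a, d] and granularity k (intervals [u·2^m, (u+1)·2^m] with m ≥ k, u ∈ ℕ, contained in [a, d] together with their forward copy [end, end + length] ⊆ [a, d], maximal under set inclusion) is nonempty. Then the intervals in C are pairwise disjoint up to endpoints, their union is an interval I ⊆ [a, d], and |I| ≥ (d - a)/4. -/

import Mathlib

/-- An interval `[x, y]` is aligned for the window `[a, d]` with granularity floor `k` if
it lies in `[a, d]`, its forward copy `[y, 2y - x]` lies in `[a, d]`, and it is a dyadic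
interval `[u·2^m, (u+1)·2^m]` with `u : ℕ` and `m ≥ k`. -/
def Aligned (a d : ℝ) (k : ℕ) (x y : ℝ) : Prop :=
  Set.Icc x y ⊆ Set.Icc a d ∧
  Set.Icc y (2 * y - x) ⊆ Set.Icc a d ∧
  ∃ u m : ℕ, k ≤ m ∧ x = (u : ℝ) * 2 ^ m ∧ y = ((u : ℝ) + 1) * 2 ^ m

/-- A maximal aligned interval (maximal under set inclusion among aligned intervals). -/
def MaximalAligned (a d : ℝ) (k : ℕ) (x y : ℝ) : Prop :=
  Aligned a d k x y ∧
    ∀ x' y', Aligned a d k x' y' → Set.Icc x y ⊆ Set.Icc x' y' →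
      Set.Icc x y = Set.Icc x' y'

/-- Coverage of maximal aligned intervals: if the family of maximal aligned intervals for
window `[a, d]` (with `0 ≤ a < d`) and granularity `k` is nonempty, then these intervals
are pairwise disjoint up to endpoints, and their union is an interval `I ⊆ [a, d]` of
length at least `(d - a)/4`. -/
lemma aligned_bounds {a d : ℝ} {k : ℕ} {x y : ℝ} (h : Aligned a d k x y) :
    ∃ u m : ℕ, k ≤ m ∧ x = (u : ℝ) * 2 ^ m ∧ y = ((u : ℝ) + 1) * 2 ^ m ∧
      a ≤ x ∧ ((u : ℝ) + 2) * 2 ^ m ≤ d := by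
  obtain ⟨h1, h2, u, m, hkm, hx, hy⟩ := h
  have hp : (0:ℝ) < 2 ^ m := by positivity
  have hxy : x ≤ y := by rw [hx, hy]; nlinarith
  have hax : a ≤ x := (h1 (Set.left_mem_Icc.2 hxy)).1
  have h2yx : y ≤ 2 * y - x := by linarith
  have hd : 2 * y - x ≤ d := (h2 (Set.right_mem_Icc.2 h2yx)).2
  refine ⟨u, m, hkm, hx, hy, hax, ?_⟩
  rw [hx, hy] at hd
  nlinarith

lemma aligned_of {a d : ℝ} {k : ℕ} (u m : ℕ) (hkm : k ≤ m)
    (hax : a ≤ (u : ℝ) * 2 ^ m) (hd : ((u : ℝ) + 2) * 2 ^ m ≤ d) :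
    Aligned a d k ((u : ℝ) * 2 ^ m) (((u : ℝ) + 1) * 2 ^ m) := by
  have hp : (0:ℝ) < 2 ^ m := by positivity
  refine ⟨Set.Icc_subset_Icc hax (by nlinarith), ?_, u, m, hkm, rfl, rfl⟩
  have : 2 * (((u : ℝ) + 1) * 2 ^ m) - (u : ℝ) * 2 ^ m = ((u : ℝ) + 2) * 2 ^ m := by ring
  rw [this]
  exact Set.Icc_subset_Icc (by nlinarith) hd

lemma icc_eq_endpoints {x y x' y' : ℝ} (hxy : x ≤ y)
    (h : Set.Icc x y = Set.Icc x' y') : x = x' ∧ y = y' := by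
  have h1 : x ∈ Set.Icc x' y' := h ▸ Set.left_mem_Icc.2 hxy
  have h2 : y ∈ Set.Icc x' y' := h ▸ Set.right_mem_Icc.2 hxy
  have hxy' : x' ≤ y' := le_trans h1.1 (le_trans hxy h2.2)
  have h3 : x' ∈ Set.Icc x y := h.symm ▸ Set.left_mem_Icc.2 hxy'
  have h4 : y' ∈ Set.Icc x y := h.symm ▸ Set.right_mem_Icc.2 hxy'
  constructor <;> linarith [h1.1, h1.2, h2.1, h2.2, h3.1, h3.2, h4.1, h4.2]

lemma dyadic_subset {u u' m m' : ℕ} (hmm : m ≤ m')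
    (hne : (Set.Ioo ((u:ℝ) * 2 ^ m) (((u:ℝ) + 1) * 2 ^ m) ∩
      Set.Ioo ((u':ℝ) * 2 ^ m') (((u':ℝ) + 1) * 2 ^ m')).Nonempty) :
    Set.Icc ((u:ℝ) * 2 ^ m) (((u:ℝ) + 1) * 2 ^ m) ⊆
      Set.Icc ((u':ℝ) * 2 ^ m') (((u':ℝ) + 1) * 2 ^ m') := by
  obtain ⟨z, ⟨hz1, hz2⟩, hz3, hz4⟩ := hne
  set e : ℕ := 2 ^ (m' - m) with he_def
  have hp : (0:ℝ) < 2 ^ m := by positivity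
  have he : (2:ℝ) ^ m' = (e : ℝ) * 2 ^ m := by
    rw [he_def]
    push_cast
    rw [← pow_add]
    congr 1
    omega
  have hlt1 : (u:ℝ) * 2 ^ m < (((u' + 1) * e : ℕ) : ℝ) * 2 ^ m := by
    push_cast
    calc (u:ℝ) * 2 ^ m < z := hz1
    _ < ((u':ℝ) + 1) * 2 ^ m' := hz4
    _ = ((u':ℝ) + 1) * e * 2 ^ m := by rw [he]; ring
  have hlt2 : (((u' * e : ℕ)) : ℝ) * 2 ^ m < ((u:ℝ) + 1) * 2 ^ m := by
    push_cast
    calc ((u':ℝ) * e) * 2 ^ m = (u':ℝ) * 2 ^ m' := by rw [he]; ring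
    _ < z := hz3
    _ < ((u:ℝ) + 1) * 2 ^ m := hz2
  have hn1 : u < (u' + 1) * e := by
    have := (mul_lt_mul_iff_left₀ hp).1 hlt1
    exact_mod_cast this
  have hn2 : u' * e < u + 1 := by
    have := (mul_lt_mul_iff_left₀ hp).1 hlt2
    have : ((u' * e : ℕ) : ℝ) < ((u + 1 : ℕ) : ℝ) := by push_cast; push_cast at this; linarith
    exact_mod_cast this
  have hle1 : ((u' * e : ℕ) : ℝ) ≤ (u : ℝ) := by exact_mod_cast Nat.lt_succ_iff.1 hn2
  have hle2 : ((u + 1 : ℕ) : ℝ) ≤ (((u' + 1) * e : ℕ) : ℝ) := by exact_mod_cast hn1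
  apply Set.Icc_subset_Icc
  · calc (u':ℝ) * 2 ^ m' = ((u' * e : ℕ) : ℝ) * 2 ^ m := by push_cast; rw [he]; ring
    _ ≤ (u:ℝ) * 2 ^ m := by nlinarith
  · calc ((u:ℝ) + 1) * 2 ^ m = ((u + 1 : ℕ) : ℝ) * 2 ^ m := by push_cast; ring
    _ ≤ (((u' + 1) * e : ℕ) : ℝ) * 2 ^ m := by nlinarith
    _ = ((u':ℝ) + 1) * 2 ^ m' := by push_cast; rw [he]; ring

-- scale bound: if ((u:ℝ)+2)*2^m ≤ d then m ≤ ⌈d⌉₊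
lemma scale_bound {d : ℝ} {u m : ℕ} (hd : ((u : ℝ) + 2) * 2 ^ m ≤ d) : m ≤ ⌈d⌉₊ := by
  have hp : (0:ℝ) < 2 ^ m := by positivity
  have h2 : (2:ℝ) ^ m ≤ d := by nlinarith [Nat.cast_nonneg (α := ℝ) u]
  have hm : (m : ℝ) < 2 ^ m := by exact_mod_cast Nat.lt_two_pow_self (n := m)
  have : (m : ℝ) ≤ (⌈d⌉₊ : ℝ) := le_trans (le_of_lt (lt_of_lt_of_le hm h2)) (Nat.le_ceil d)
  exact_mod_cast this

lemma exists_maximal_mem {a d : ℝ} {k : ℕ} (z : ℝ)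
    (hz : ∃ u m : ℕ, k ≤ m ∧ a ≤ (u:ℝ) * 2 ^ m ∧ ((u:ℝ) + 2) * 2 ^ m ≤ d ∧
      (u:ℝ) * 2 ^ m ≤ z ∧ z ≤ ((u:ℝ) + 1) * 2 ^ m) :
    ∃ x y : ℝ, MaximalAligned a d k x y ∧ z ∈ Set.Icc x y := by
  classical
  set P : ℕ → Prop := fun m => ∃ u : ℕ, k ≤ m ∧ a ≤ (u:ℝ) * 2 ^ m ∧
      ((u:ℝ) + 2) * 2 ^ m ≤ d ∧ (u:ℝ) * 2 ^ m ≤ z ∧ z ≤ ((u:ℝ) + 1) * 2 ^ m with hP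
  obtain ⟨u, m, h1, h2, h3, h4, h5⟩ := hz
  have hPm : P m := ⟨u, h1, h2, h3, h4, h5⟩
  have hmM : m ≤ ⌈d⌉₊ := scale_bound h3
  set m0 := Nat.findGreatest P ⌈d⌉₊ with hm0
  have hPm0 : P m0 := Nat.findGreatest_spec hmM hPm
  obtain ⟨u0, hk0, ha0, hd0, hz0l, hz0r⟩ := hPm0
  have hp0 : (0:ℝ) < 2 ^ m0 := by positivity
  refine ⟨(u0:ℝ) * 2 ^ m0, ((u0:ℝ) + 1) * 2 ^ m0, ⟨aligned_of u0 m0 hk0 ha0 hd0, ?_⟩,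
    hz0l, hz0r⟩
  intro x' y' hA hsub
  obtain ⟨u', m', hk', hx', hy', ha', hd'⟩ := aligned_bounds hA
  have hp' : (0:ℝ) < 2 ^ m' := by positivity
  have hxy0 : (u0:ℝ) * 2 ^ m0 ≤ ((u0:ℝ) + 1) * 2 ^ m0 := by nlinarith
  have hsub' := (Set.Icc_subset_Icc_iff hxy0).1 hsub
  -- P m'
  have hPm' : P m' := by
    refine ⟨u', hk', by rw [← hx']; exact ha', by rw [hx', hy'] at hsub'; exact hd', ?_, ?_⟩
    · rw [← hx']; linarith [hsub'.1]
    · rw [← hy']; linarith [hsub'.2]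
  have hM' : m' ≤ ⌈d⌉₊ := scale_bound hd'
  have hm'le : m' ≤ m0 := by
    by_contra hcon
    exact (Nat.findGreatest_is_greatest (lt_of_not_ge hcon) hM') hPm'
  -- also m0 ≤ m' from lengths
  have hlen : (2:ℝ) ^ m0 ≤ 2 ^ m' := by
    rw [hx', hy'] at hsub'
    nlinarith [hsub'.1, hsub'.2]
  have hm0le : m0 ≤ m' := by
    have := (pow_le_pow_iff_right₀ (a := (2:ℝ)) (by norm_num)).1 hlen
    exact this
  have heq : m0 = m' := le_antisymm hm0le hm'le
  subst heq
  have hx'' : x' = (u0:ℝ) * 2 ^ m0 := by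
    rw [hx', hy'] at hsub'
    have := hsub'.1; have := hsub'.2
    nlinarith
  have hy'' : y' = ((u0:ℝ) + 1) * 2 ^ m0 := by
    rw [hx', hy'] at hsub'
    nlinarith [hsub'.1, hsub'.2]
  rw [hx'', hy'']


/-- location of an aligned interval: between p and q, and s+2 ≤ t -/
lemma aligned_loc {a d : ℝ} {k : ℕ} {x y : ℝ} {u m : ℕ} (hkm : k ≤ m) (hx : x = (u : ℝ) * 2 ^ m) (hy : y = ((u : ℝ) + 1) * 2 ^ m)
    (hax : a ≤ x) (hud : ((u : ℝ) + 2) * 2 ^ m ≤ d) :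
    (⌈a / 2 ^ k⌉₊ : ℝ) * 2 ^ k ≤ x ∧ y ≤ ((⌊d / 2 ^ k⌋₊ : ℝ) - 1) * 2 ^ k ∧
      ⌈a / 2 ^ k⌉₊ + 2 ≤ ⌊d / 2 ^ k⌋₊ := by
  have hgk : (0:ℝ) < 2 ^ k := by positivity
  set e : ℕ := 2 ^ (m - k) with he_def
  have he1 : 1 ≤ e := Nat.one_le_two_pow
  have he : (2:ℝ) ^ m = (e : ℝ) * 2 ^ k := by
    rw [he_def]; push_cast; rw [← pow_add]; congr 1; omega
  set v : ℕ := u * e with hv_def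
  have hxv : x = (v : ℝ) * 2 ^ k := by rw [hx, he, hv_def]; push_cast; ring
  have hyv : y = ((v : ℝ) + e) * 2 ^ k := by rw [hy, he, hv_def]; push_cast; ring
  -- s ≤ v
  have hsv : ⌈a / 2 ^ k⌉₊ ≤ v := by
    apply Nat.ceil_le.2
    rw [div_le_iff₀ hgk]
    rw [hxv] at hax; exact hax
  -- v + 2e ≤ t
  have hvt : v + 2 * e ≤ ⌊d / 2 ^ k⌋₊ := by
    apply Nat.le_floor
    rw [le_div_iff₀ hgk]
    have : ((v : ℝ) + 2 * e) * 2 ^ k = ((u:ℝ) + 2) * 2 ^ m := by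
      rw [he, hv_def]; push_cast; ring
    push_cast
    rw [this]; exact hud
  have hsv' : (⌈a / 2 ^ k⌉₊ : ℝ) ≤ (v : ℝ) := by exact_mod_cast hsv
  have hvt' : ((v + 2 * e : ℕ) : ℝ) ≤ (⌊d / 2 ^ k⌋₊ : ℝ) := by exact_mod_cast hvt
  push_cast at hvt'
  have he1' : (1:ℝ) ≤ (e : ℝ) := by exact_mod_cast he1
  refine ⟨?_, ?_, ?_⟩
  · rw [hxv]; nlinarith
  · rw [hyv]; nlinarith
  · omega


theorem maximal_aligned_coverage (a d : ℝ) (k : ℕ)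
    (ha : 0 ≤ a) (had : a < d)
    (hne : ∃ x y, MaximalAligned a d k x y) :
    (∀ x y x' y', MaximalAligned a d k x y → MaximalAligned a d k x' y' →
      (x, y) ≠ (x', y') → Set.Ioo x y ∩ Set.Ioo x' y' = ∅) ∧
    (∃ p q : ℝ, p ≤ q ∧
      (⋃ (xy : ℝ × ℝ) (_ : MaximalAligned a d k xy.1 xy.2), Set.Icc xy.1 xy.2)
        = Set.Icc p q ∧
      Set.Icc p q ⊆ Set.Icc a d ∧
      (d - a) / 4 ≤ q - p) := by
  have hgk : (0:ℝ) < 2 ^ k := by positivity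
  constructor
  · -- disjointness
    intro x y x' y' hM hM' hneq
    by_contra hcon
    have hnonempty : (Set.Ioo x y ∩ Set.Ioo x' y').Nonempty :=
      Set.nonempty_iff_ne_empty.2 hcon
    obtain ⟨u, m, hkm, hx, hy, -, -⟩ := aligned_bounds hM.1
    obtain ⟨u', m', hkm', hx', hy', -, -⟩ := aligned_bounds hM'.1
    have hp : (0:ℝ) < 2 ^ m := by positivity
    have hp' : (0:ℝ) < 2 ^ m' := by positivity
    have hxylt : x < y := by rw [hx, hy]; nlinarith
    have hxylt' : x' < y' := by rw [hx', hy']; nlinarith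
    rcases le_total m m' with hmm | hmm
    · have hsub : Set.Icc x y ⊆ Set.Icc x' y' := by
        rw [hx, hy, hx', hy']
        exact dyadic_subset hmm (by rw [hx, hy, hx', hy'] at hnonempty; exact hnonempty)
      have heq := hM.2 x' y' hM'.1 hsub
      obtain ⟨he1, he2⟩ := icc_eq_endpoints hxylt.le heq
      exact hneq (by rw [he1, he2])
    · have hsub : Set.Icc x' y' ⊆ Set.Icc x y := by
        rw [hx, hy, hx', hy']
        refine dyadic_subset hmm ?_
        rw [hx, hy, hx', hy'] at hnonempty
        exact ⟨hnonempty.choose, hnonempty.choose_spec.2, hnonempty.choose_spec.1⟩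
      have heq := hM'.2 x y hM.1 hsub
      obtain ⟨he1, he2⟩ := icc_eq_endpoints hxylt'.le heq
      exact hneq (by rw [he1, he2])
  · -- the union
    set s := ⌈a / 2 ^ k⌉₊ with hs_def
    set t := ⌊d / 2 ^ k⌋₊ with ht_def
    obtain ⟨x0, y0, hM0⟩ := hne
    obtain ⟨u0, m0, hkm0, hx0, hy0, hax0, hud0⟩ := aligned_bounds hM0.1
    obtain ⟨-, -, hst⟩ := aligned_loc (k := k) hkm0 hx0 hy0 hax0 hud0
    have hst' : (s : ℝ) + 2 ≤ (t : ℝ) := by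
      have := Nat.cast_le (α := ℝ).2 hst
      push_cast at this
      linarith
    refine ⟨(s:ℝ) * 2 ^ k, ((t:ℝ) - 1) * 2 ^ k, by nlinarith, ?_, ?_, ?_⟩
    · -- union equality
      ext z
      simp only [Set.mem_iUnion, Set.mem_Icc]
      constructor
      · rintro ⟨⟨x, y⟩, hM, hz1, hz2⟩
        obtain ⟨u, m, hkm, hx, hy, hax, hud⟩ := aligned_bounds hM.1
        obtain ⟨hl, hr, -⟩ := aligned_loc (k := k) hkm hx hy hax hud
        exact ⟨le_trans hl hz1, le_trans hz2 hr⟩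
      · rintro ⟨hz1, hz2⟩
        have hz0 : 0 ≤ z := by
          have : a ≤ (s:ℝ) * 2 ^ k := by
            have := Nat.le_ceil (a / 2 ^ k)
            rw [div_le_iff₀ hgk] at this
            exact this
          linarith
        set w : ℕ := min ⌊z / 2 ^ k⌋₊ (t - 2) with hw_def
        have hws : s ≤ w := by
          have h1 : s ≤ ⌊z / 2 ^ k⌋₊ := by
            apply Nat.le_floor
            rw [le_div_iff₀ hgk]
            exact_mod_cast hz1
          have h2 : s ≤ t - 2 := by omega
          exact le_min h1 h2
        have hwt : w + 2 ≤ t := by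
          have : w ≤ t - 2 := min_le_right _ _
          omega
        have hwt' : ((w:ℝ) + 2) ≤ (t:ℝ) := by exact_mod_cast hwt
        have haw : a ≤ (w:ℝ) * 2 ^ k := by
          have hws' : (s:ℝ) ≤ (w:ℝ) := by exact_mod_cast hws
          have : a ≤ (s:ℝ) * 2 ^ k := by
            have := Nat.le_ceil (a / 2 ^ k)
            rw [div_le_iff₀ hgk] at this
            exact this
          nlinarith
        have hwd : ((w:ℝ) + 2) * 2 ^ k ≤ d := by
          have hd0 : (0:ℝ) < d := lt_of_le_of_lt ha had
          have htd : (t:ℝ) * 2 ^ k ≤ d :=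
            (le_div_iff₀ hgk).1 (Nat.floor_le (div_nonneg hd0.le hgk.le))
          nlinarith
        have hwz : (w:ℝ) * 2 ^ k ≤ z := by
          have h1 : w ≤ ⌊z / 2 ^ k⌋₊ := min_le_left _ _
          have h2 : (⌊z / 2 ^ k⌋₊ : ℝ) ≤ z / 2 ^ k := Nat.floor_le (by positivity)
          have h1' : (w:ℝ) ≤ (⌊z / 2 ^ k⌋₊ : ℝ) := by exact_mod_cast h1
          exact (le_div_iff₀ hgk).1 (by linarith)
        have hzw : z ≤ ((w:ℝ) + 1) * 2 ^ k := by
          rcases le_or_gt (⌊z / 2 ^ k⌋₊) (t - 2) with hc | hc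
          · have hwe : w = ⌊z / 2 ^ k⌋₊ := min_eq_left hc
            have := Nat.lt_floor_add_one (z / 2 ^ k)
            rw [div_lt_iff₀ hgk] at this
            rw [hwe]
            push_cast
            linarith
          · have hwe : w = t - 2 := min_eq_right hc.le
            have hwe' : (w:ℝ) = (t:ℝ) - 2 := by
              rw [hwe]
              have : 2 ≤ t := by omega
              push_cast [this]
              ring
            rw [hwe']
            calc z ≤ ((t:ℝ) - 1) * 2 ^ k := hz2
            _ = ((t:ℝ) - 2 + 1) * 2 ^ k := by ring
          -- done
        obtain ⟨x, y, hMax, hmem⟩ := exists_maximal_mem z ⟨w, k, le_refl k, haw, hwd, hwz, hzw⟩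
        exact ⟨(x, y), hMax, hmem⟩
    · -- Icc p q ⊆ Icc a d
      apply Set.Icc_subset_Icc
      · have := Nat.le_ceil (a / 2 ^ k)
        rw [div_le_iff₀ hgk] at this
        exact this
      · have hd0 : (0:ℝ) < d := lt_of_le_of_lt ha had
        have := (le_div_iff₀ hgk).1 (Nat.floor_le (div_nonneg hd0.le hgk.le))
        nlinarith
    · -- length bound
      have h1 : d / 2 ^ k < (t:ℝ) + 1 := Nat.lt_floor_add_one _
      have h2 : (s:ℝ) < a / 2 ^ k + 1 := Nat.ceil_lt_add_one (div_nonneg ha hgk.le)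
      rw [div_lt_iff₀ hgk] at h1
      have h2' : ((s:ℝ) - 1) * 2 ^ k < a :=
        (lt_div_iff₀ hgk).1 (by linarith)
      have key : d - a < ((t:ℝ) - (s:ℝ) + 2) * 2 ^ k := by nlinarith
      have : ((t:ℝ) - 1) * 2 ^ k - (s:ℝ) * 2 ^ k = ((t:ℝ) - (s:ℝ) - 1) * 2 ^ k := by ring
      rw [this]
      nlinarith
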